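/- Structure of the current for a potential in canonical form: suppose the real n×3 matrix A is in canonical form, i.e. there are nonnegative integers x, y, d with x + d ≤ p, y + d ≤ q, x + y + d ≤ 3, and positive reals σ₁,…,σ_x, μ₁,…,μ_y such that the only nonzero entries of A are A(i, i) = σ_i for 1 ≤ i ≤ x, A(p + j, x + j) = μ_j for 1 ≤ j ≤ y, and A(x + k, x + y + k) = A(p + y + k, x + y + k) = 1 for 1 ≤ k ≤ d. Let J := A·(Aᵀ η A) − trace(Aᵀ η A)·A. Then J(ν, k) = 0 for every position (ν, k) at which A(ν, k) = 0, and there exists a single real number α such that J(x + k, x + y + k) = α and J(p + y + k, x + y + k) = α for all 1 ≤ k ≤ d (in particular, the current has nonzero entries only at the diagonal positions of the blocks of A, and the entries at the two identity blocks are all equal to one common value α). -/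
import Mathlib


open Matrix

/-- The pseudo-Euclidean metric matrix of signature `(p, q)`. -/
noncomputable def eta (p q : ℕ) : Matrix (Fin (p + q)) (Fin (p + q)) ℝ :=
  Matrix.diagonal fun i => if (i : ℕ) < p then 1 else -1

/-- If the potential `A` is in canonical (hyperbolic SVD) form with parameters `x, y, d`
and positive diagonal entries `σ`, `μ`, then the current
`J = A (Aᵀ η A) - trace (Aᵀ η A) • A` vanishes wherever `A` vanishes, and its entries at
the two identity blocks of `A` are all equal to one common real number `α`. -/
theorem canonicalPotential_current_structure (p q : ℕ) (hp : 1 ≤ p) (hq : 1 ≤ q)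
    (x y d : ℕ) (hxd : x + d ≤ p) (hyd : y + d ≤ q) (hxyd : x + y + d ≤ 3)
    (σ μ : ℕ → ℝ) (hσ : ∀ i < x, 0 < σ i) (hμ : ∀ j < y, 0 < μ j)
    (A : Matrix (Fin (p + q)) (Fin 3) ℝ)
    (hA : ∀ (i : Fin (p + q)) (j : Fin 3),
      A i j =
        if (i : ℕ) < x ∧ (j : ℕ) = (i : ℕ) then σ (i : ℕ)
        else if p ≤ (i : ℕ) ∧ (i : ℕ) < p + y ∧ (j : ℕ) = x + ((i : ℕ) - p) then
          μ ((i : ℕ) - p)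
        else if x ≤ (i : ℕ) ∧ (i : ℕ) < x + d ∧ (j : ℕ) = x + y + ((i : ℕ) - x) then 1
        else if p + y ≤ (i : ℕ) ∧ (i : ℕ) < p + y + d ∧
            (j : ℕ) = x + y + ((i : ℕ) - (p + y)) then 1
        else 0)
    (J : Matrix (Fin (p + q)) (Fin 3) ℝ)
    (hJ : J = A * (Aᵀ * eta p q * A) - (Aᵀ * eta p q * A).trace • A) :
    (∀ (ν : Fin (p + q)) (k : Fin 3), A ν k = 0 → J ν k = 0) ∧
    ∃ α : ℝ, ∀ k : ℕ, ∀ hk : k < d,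
      J ⟨x + k, by omega⟩ ⟨x + y + k, by omega⟩ = α ∧
      J ⟨p + y + k, by omega⟩ ⟨x + y + k, by omega⟩ = α := by
  subst hJ
  set B := Aᵀ * eta p q * A with hBdef
  have hrow : ∀ (i : Fin (p + q)) (m k : Fin 3), m ≠ k → A i m * A i k = 0 := by
    intro i m k hmk
    have hmk' : (m : ℕ) ≠ (k : ℕ) := fun h => hmk (Fin.ext h)
    simp only [hA]
    split_ifs <;> first | ring1 | (exfalso; omega)
  have hB : ∀ m k : Fin 3,
      B m k = ∑ j, (A j m * (if (j : ℕ) < p then (1 : ℝ) else -1)) * A j k := by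
    intro m k
    rw [hBdef, Matrix.mul_apply]
    refine Finset.sum_congr rfl fun j _ => ?_
    rw [eta, Matrix.mul_diagonal, Matrix.transpose_apply]
  have hBoff : ∀ m k : Fin 3, m ≠ k → B m k = 0 := by
    intro m k hmk
    rw [hB]
    apply Finset.sum_eq_zero
    intro j _
    rw [mul_right_comm, hrow j m k hmk, zero_mul]
  have hJform : ∀ (ν : Fin (p + q)) (kk : Fin 3),
      (A * B - B.trace • A) ν kk = A ν kk * (B kk kk - B.trace) := by
    intro ν kk
    rw [Matrix.sub_apply, Matrix.smul_apply, smul_eq_mul, Matrix.mul_apply,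
      Finset.sum_eq_single kk]
    · ring
    · intro m _ hm; rw [hBoff m kk hm, mul_zero]
    · intro h; exact absurd (Finset.mem_univ kk) h
  refine ⟨fun ν k h => by rw [hJform, h, zero_mul], -B.trace, ?_⟩
  intro k hk
  have hA1 : A ⟨x + k, by omega⟩ ⟨x + y + k, by omega⟩ = 1 := by
    simp only [hA]
    split_ifs <;> first | rfl | (exfalso; omega)
  have hA2 : A ⟨p + y + k, by omega⟩ ⟨x + y + k, by omega⟩ = 1 := by
    simp only [hA]
    split_ifs <;> first | rfl | (exfalso; omega)
  have hBcc : B ⟨x + y + k, by omega⟩ ⟨x + y + k, by omega⟩ = 0 := by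
    rw [hB]
    have hpt : ∀ j : Fin (p + q),
        (A j ⟨x + y + k, by omega⟩ * (if (j : ℕ) < p then (1 : ℝ) else -1)) *
            A j ⟨x + y + k, by omega⟩
          = (if j = (⟨x + k, by omega⟩ : Fin (p + q)) then (1 : ℝ) else 0)
            + (if j = (⟨p + y + k, by omega⟩ : Fin (p + q)) then (-1 : ℝ) else 0) := by
      intro j
      simp only [hA, Fin.ext_iff, Fin.val_mk]
      split_ifs <;> first | (exfalso; omega) | norm_num
    rw [Finset.sum_congr rfl fun j _ => hpt j, Finset.sum_add_distrib]
    simp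
  exact ⟨by rw [hJform, hA1, hBcc]; ring, by rw [hJform, hA2, hBcc]; ring⟩
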